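/- For n \ge 2 and \ell with n\ell^2 \ne 1, the polynomial Q_2^{0,\ell}(t) = (n^2(n\ell^2-1)t^2 + 2n\ell(n-1)t - n^2\ell^2 + 3n - 2) / ((n-1)((n\ell+1)^2 - (n-1))) satisfies \int_{-1}^1 Q_2^{0,\ell}(t)\,(t-\ell)\,d\mu_n(t) = 0 and \int_{-1}^1 t\, Q_2^{0,\ell}(t)\,(t-\ell)\,d\mu_n(t) = 0, and Q_2^{0,\ell}(1) = 1. -/

import Mathlib

noncomputable def rchoose (z : ℝ) (j : ℕ) : ℝ :=
  (∏ t ∈ Finset.range j, (z - t)) / (Nat.factorial j)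

/-- Binary Krawtchouk polynomial `K_i^{(n)}(z)`. -/
noncomputable def Kr (n i : ℕ) (z : ℝ) : ℝ :=
  ∑ j ∈ Finset.range (i + 1), (-1 : ℝ) ^ j * rchoose z j * rchoose ((n : ℝ) - z) (i - j)

/-- Normalized Krawtchouk polynomial `Q_i(t) = K_i^{(n)}(n(1-t)/2)/binom(n,i)`. -/
noncomputable def Qn (n i : ℕ) (t : ℝ) : ℝ :=
  Kr n i ((n : ℝ) * (1 - t) / 2) / (n.choose i : ℝ)

/-- The point `t_m = -1 + 2m/n`. -/
noncomputable def tpt (n m : ℕ) : ℝ := -1 + 2 * (m : ℝ) / (n : ℝ)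

/-- Integral of `f` with respect to the measure `μ_n = 2^{-n} ∑ binom(n,i) δ_{t_i}`. -/
noncomputable def muInt (n : ℕ) (f : ℝ → ℝ) : ℝ :=
  ((2 : ℝ) ^ n)⁻¹ * ∑ i ∈ Finset.range (n + 1), (n.choose i : ℝ) * f (tpt n i)


lemma prod_shift (m : ℕ) (x : ℝ) :
    ∏ j ∈ Finset.range (m+1), (x + 1 - j) =
      ∏ j ∈ Finset.range (m+1), (x - j) + (m+1) * ∏ j ∈ Finset.range m, (x - j) := by
  have h : ∀ j ∈ Finset.range m, x + 1 - ((j+1 : ℕ) : ℝ) = x - j := by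
    intro j _; push_cast; ring
  rw [Finset.prod_range_succ' (fun j : ℕ => x + 1 - (j : ℝ)), Finset.prod_congr rfl h,
    Finset.prod_range_succ]
  push_cast; ring

lemma binom_rec (n : ℕ) (g : ℕ → ℝ) :
    ∑ i ∈ Finset.range (n+2), ((n+1).choose i : ℝ) * g i
      = ∑ i ∈ Finset.range (n+1), (n.choose i : ℝ) * (g i + g (i+1)) := by
  rw [Finset.sum_range_succ' (fun i => ((n+1).choose i : ℝ) * g i)]
  have h : ∀ i ∈ Finset.range (n+1), ((n+1).choose (i+1) : ℝ) * g (i+1)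
      = (n.choose i : ℝ) * g (i+1) + (n.choose (i+1) : ℝ) * g (i+1) := by
    intro i _; rw [Nat.choose_succ_succ]; push_cast; ring
  rw [Finset.sum_congr rfl h, Finset.sum_add_distrib]
  have h2 : ∑ i ∈ Finset.range (n+1), (n.choose (i+1) : ℝ) * g (i+1)
      = ∑ i ∈ Finset.range (n+1), (n.choose i : ℝ) * g i - (n.choose 0 : ℝ) * g 0 := by
    rw [eq_sub_iff_add_eq, ← Finset.sum_range_succ' (fun i => (n.choose i : ℝ) * g i),
      Finset.sum_range_succ, Nat.choose_succ_self]
    simp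
  rw [h2]
  simp only [Nat.choose_zero_right, Nat.cast_one, mul_add, Finset.sum_add_distrib]
  ring

lemma ffsum : ∀ (n k : ℕ),
    ∑ i ∈ Finset.range (n+1), (n.choose i : ℝ) * ∏ j ∈ Finset.range k, ((i:ℝ) - j)
      = (∏ j ∈ Finset.range k, ((n:ℝ) - j)) * 2^n / 2^k := by
  intro n
  induction n with
  | zero =>
    intro k
    cases k with
    | zero => simp
    | succ m =>
      rw [Finset.sum_range_one]
      rw [Finset.prod_range_succ' (fun j : ℕ => ((0:ℕ):ℝ) - (j:ℝ))]
      simp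
  | succ n ih =>
    intro k
    cases k with
    | zero =>
      simp only [Finset.prod_range_zero, mul_one, one_mul, pow_zero, div_one]
      exact_mod_cast Nat.sum_range_choose (n+1)
    | succ m =>
      rw [show n + 1 + 1 = n + 2 from rfl,
        binom_rec n (fun i => ∏ j ∈ Finset.range (m+1), ((i:ℝ) - j))]
      have h : ∀ i ∈ Finset.range (n+1),
          (n.choose i : ℝ) * ((∏ j ∈ Finset.range (m+1), ((i:ℝ) - j))
              + ∏ j ∈ Finset.range (m+1), (((i+1:ℕ):ℝ) - j))
            = 2 * ((n.choose i : ℝ) * ∏ j ∈ Finset.range (m+1), ((i:ℝ) - j))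
              + ((m:ℝ)+1) * ((n.choose i : ℝ) * ∏ j ∈ Finset.range m, ((i:ℝ) - j)) := by
        intro i _
        have hs := prod_shift m (i:ℝ)
        push_cast
        rw [hs]; ring
      rw [Finset.sum_congr rfl h, Finset.sum_add_distrib, ← Finset.mul_sum, ← Finset.mul_sum,
        ih (m+1), ih m]
      have h2 := prod_shift m ((n:ℝ))
      push_cast
      rw [h2, pow_succ, pow_succ]
      have h2m : (2:ℝ)^m ≠ 0 := pow_ne_zero _ two_ne_zero
      have h2n : (2:ℝ)^n ≠ 0 := pow_ne_zero _ two_ne_zero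
      field_simp

lemma Ssum_odd (n : ℕ) (hn : n ≠ 0) (f : ℝ → ℝ) (hf : ∀ t, f (-t) = - f t) :
    ∑ i ∈ Finset.range (n+1), (n.choose i : ℝ) * f (tpt n i) = 0 := by
  have hN : (n:ℝ) ≠ 0 := Nat.cast_ne_zero.mpr hn
  have h1 := Finset.sum_range_reflect (fun i => (n.choose i : ℝ) * f (tpt n i)) (n+1)
  simp only [Nat.add_sub_cancel] at h1
  have key : ∀ j ∈ Finset.range (n+1),
      (n.choose (n - j) : ℝ) * f (tpt n (n - j)) = - ((n.choose j : ℝ) * f (tpt n j)) := by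
    intro j hj
    have hjn : j ≤ n := Nat.lt_succ_iff.mp (Finset.mem_range.mp hj)
    rw [Nat.choose_symm hjn]
    have ht : tpt n (n - j) = - tpt n j := by
      unfold tpt
      have hc : ((n - j : ℕ) : ℝ) = (n:ℝ) - j := by
        push_cast [hjn]; ring
      rw [hc]
      field_simp
      ring
    rw [ht, hf]; ring
  rw [Finset.sum_congr rfl key, Finset.sum_neg_distrib] at h1
  linarith

lemma Ssum2 (n : ℕ) (hn : n ≠ 0) :
    ∑ i ∈ Finset.range (n+1), (n.choose i : ℝ) * (tpt n i)^2 = 2^n / (n:ℝ) := by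
  have hN : (n:ℝ) ≠ 0 := Nat.cast_ne_zero.mpr hn
  have key : ∀ i ∈ Finset.range (n+1), (n.choose i : ℝ) * (tpt n i)^2
      = (4/(n:ℝ)^2) * ((n.choose i:ℝ) * ∏ j ∈ Finset.range 2, ((i:ℝ)-j))
        + ((4-4*(n:ℝ))/(n:ℝ)^2) * ((n.choose i:ℝ) * ∏ j ∈ Finset.range 1, ((i:ℝ)-j))
        + 1 * ((n.choose i:ℝ) * ∏ j ∈ Finset.range 0, ((i:ℝ)-j)) := by
    intro i _
    simp only [tpt, Finset.prod_range_succ, Finset.prod_range_zero, Finset.prod_range_one]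
    push_cast
    field_simp
    ring
  rw [Finset.sum_congr rfl key, Finset.sum_add_distrib, Finset.sum_add_distrib,
    ← Finset.mul_sum, ← Finset.mul_sum, ← Finset.mul_sum, ffsum n 2, ffsum n 1, ffsum n 0]
  simp only [Finset.prod_range_succ, Finset.prod_range_zero, Finset.prod_range_one]
  have h2n : (2:ℝ)^n ≠ 0 := pow_ne_zero _ two_ne_zero
  push_cast
  field_simp
  ring

lemma Ssum4 (n : ℕ) (hn : n ≠ 0) :
    ∑ i ∈ Finset.range (n+1), (n.choose i : ℝ) * (tpt n i)^4
      = 2^n * (3*(n:ℝ) - 2) / (n:ℝ)^3 := by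
  have hN : (n:ℝ) ≠ 0 := Nat.cast_ne_zero.mpr hn
  have key : ∀ i ∈ Finset.range (n+1), (n.choose i : ℝ) * (tpt n i)^4
      = (16/(n:ℝ)^4) * ((n.choose i:ℝ) * ∏ j ∈ Finset.range 4, ((i:ℝ)-j))
        + ((96-32*(n:ℝ))/(n:ℝ)^4) * ((n.choose i:ℝ) * ∏ j ∈ Finset.range 3, ((i:ℝ)-j))
        + ((112-96*(n:ℝ)+24*(n:ℝ)^2)/(n:ℝ)^4) * ((n.choose i:ℝ) * ∏ j ∈ Finset.range 2, ((i:ℝ)-j))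
        + ((16-32*(n:ℝ)+24*(n:ℝ)^2-8*(n:ℝ)^3)/(n:ℝ)^4) * ((n.choose i:ℝ) * ∏ j ∈ Finset.range 1, ((i:ℝ)-j))
        + 1 * ((n.choose i:ℝ) * ∏ j ∈ Finset.range 0, ((i:ℝ)-j)) := by
    intro i _
    simp only [tpt, Finset.prod_range_succ, Finset.prod_range_zero, Finset.prod_range_one]
    push_cast
    field_simp
    ring
  rw [Finset.sum_congr rfl key, Finset.sum_add_distrib, Finset.sum_add_distrib,
    Finset.sum_add_distrib, Finset.sum_add_distrib,
    ← Finset.mul_sum, ← Finset.mul_sum, ← Finset.mul_sum, ← Finset.mul_sum, ← Finset.mul_sum,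
    ffsum n 4, ffsum n 3, ffsum n 2, ffsum n 1, ffsum n 0]
  simp only [Finset.prod_range_succ, Finset.prod_range_zero, Finset.prod_range_one]
  have h2n : (2:ℝ)^n ≠ 0 := pow_ne_zero _ two_ne_zero
  push_cast
  field_simp
  ring

lemma muInt_quartic (n : ℕ) (hn : n ≠ 0) (a b c d e : ℝ) :
    muInt n (fun t => a*t^4 + b*t^3 + c*t^2 + d*t + e)
      = a*(3*(n:ℝ)-2)/(n:ℝ)^3 + c/(n:ℝ) + e := by
  have hN : (n:ℝ) ≠ 0 := Nat.cast_ne_zero.mpr hn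
  have h2n : (2:ℝ)^n ≠ 0 := pow_ne_zero _ two_ne_zero
  have h0 : ∑ i ∈ Finset.range (n+1), (n.choose i : ℝ) = 2^n := by
    exact_mod_cast Nat.sum_range_choose n
  have h3 := Ssum_odd n hn (fun t => t^3) (fun t => by ring)
  have h1 := Ssum_odd n hn (fun t => t) (fun t => by ring)
  unfold muInt
  have key : ∀ i ∈ Finset.range (n+1), (n.choose i : ℝ) *
      (a*(tpt n i)^4 + b*(tpt n i)^3 + c*(tpt n i)^2 + d*(tpt n i) + e)
      = a * ((n.choose i : ℝ) * (tpt n i)^4) + b * ((n.choose i : ℝ) * (tpt n i)^3)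
        + c * ((n.choose i : ℝ) * (tpt n i)^2) + d * ((n.choose i : ℝ) * (tpt n i))
        + e * (n.choose i : ℝ) := by
    intro i _; ring
  rw [Finset.sum_congr rfl key, Finset.sum_add_distrib, Finset.sum_add_distrib,
    Finset.sum_add_distrib, Finset.sum_add_distrib,
    ← Finset.mul_sum, ← Finset.mul_sum, ← Finset.mul_sum, ← Finset.mul_sum, ← Finset.mul_sum,
    Ssum4 n hn, h3, Ssum2 n hn, h1, h0]
  field_simp
  ring


/-- The polynomial `Q_2^{0,ℓ}`: orthogonality to polynomials of degree at most 1
with respect to `(t - ℓ) dμ_n(t)`, and normalization at `t = 1`. -/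
theorem Q2_0ell_properties (n : ℕ) (hn : 2 ≤ n) (ℓ : ℝ) (h1 : (n : ℝ) * ℓ ^ 2 ≠ 1)
    (hden : ((n : ℝ) - 1) * (((n : ℝ) * ℓ + 1) ^ 2 - ((n : ℝ) - 1)) ≠ 0)
    (Q2 : ℝ → ℝ)
    (hQ2 : ∀ t, Q2 t = ((n : ℝ) ^ 2 * ((n : ℝ) * ℓ ^ 2 - 1) * t ^ 2
        + 2 * (n : ℝ) * ℓ * ((n : ℝ) - 1) * t - (n : ℝ) ^ 2 * ℓ ^ 2 + 3 * (n : ℝ) - 2)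
      / (((n : ℝ) - 1) * (((n : ℝ) * ℓ + 1) ^ 2 - ((n : ℝ) - 1)))) :
    muInt n (fun t => Q2 t * (t - ℓ)) = 0 ∧
      muInt n (fun t => t * Q2 t * (t - ℓ)) = 0 ∧ Q2 1 = 1 := by
  have hn0 : n ≠ 0 := by omega
  have hN : (n:ℝ) ≠ 0 := Nat.cast_ne_zero.mpr hn0
  set N : ℝ := (n:ℝ) with hNdef
  set aa : ℝ := N^2 * (N*ℓ^2 - 1) with haa
  set bb : ℝ := 2*N*ℓ*(N-1) with hbb
  set cc : ℝ := -N^2*ℓ^2 + 3*N - 2 with hcc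
  set Dn : ℝ := (N - 1) * ((N*ℓ + 1)^2 - (N - 1)) with hDn
  have hQ2' : ∀ t, Q2 t = (aa*t^2 + bb*t + cc) / Dn := by
    intro t; rw [hQ2 t, hcc]; ring_nf
  refine ⟨?_, ?_, ?_⟩
  · have hfun : (fun t => Q2 t * (t - ℓ))
        = fun t => (0:ℝ)*t^4 + (aa/Dn)*t^3 + ((bb - aa*ℓ)/Dn)*t^2
            + ((cc - bb*ℓ)/Dn)*t + (-cc*ℓ/Dn) := by
      funext t
      rw [hQ2' t]
      field_simp
      ring
    rw [hfun, muInt_quartic n hn0]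
    field_simp
    ring
  · have hfun : (fun t => t * Q2 t * (t - ℓ))
        = fun t => (aa/Dn)*t^4 + ((bb - aa*ℓ)/Dn)*t^3 + ((cc - bb*ℓ)/Dn)*t^2
            + (-cc*ℓ/Dn)*t + (0:ℝ) := by
      funext t
      rw [hQ2' t]
      field_simp
      ring
    rw [hfun, muInt_quartic n hn0]
    field_simp
    ring
  · rw [hQ2 1, div_eq_one_iff_eq hden]
    ring
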